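/- arXiv:math/0003095 — 3 statements merged into one kernel-verified Lean document; each statement's English description precedes it below -/
import Mathlib

section
/- Let E and F be Banach lattices with E an ideal in F and the inclusion E ↪ F continuous. For every φ in the dual Banach lattice F*, the restriction of the absolute value |φ| to E equals the absolute value (computed in E*) of the restriction of φ to E, i.e. |φ|∣_E = |φ∣_E|. -/
/-- Let `E` and `F` be Banach lattices with `E` an ideal in `F` (via the lattice
embedding `J`) with continuous inclusion. For every `φ ∈ F*`, the restriction of `|φ|`
to `E` equals the absolute value, computed in `E*`, of the restriction of `φ` to `E`;
both are expressed via the formula `|φ|(x) = sup {φ y : |y| ≤ x}` on the positive cone. -/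
theorem stmt_3 {E F : Type*}
    [NormedAddCommGroup E] [Lattice E] [HasSolidNorm E] [IsOrderedAddMonoid E] [NormedSpace ℝ E] [CompleteSpace E]
    [NormedAddCommGroup F] [Lattice F] [HasSolidNorm F] [IsOrderedAddMonoid F] [NormedSpace ℝ F] [CompleteSpace F]
    (J : E →L[ℝ] F) (hJinj : Function.Injective J)
    (hJlat : ∀ a : E, J |a| = |J a|)
    (hJideal : ∀ (u : F) (a : E), |u| ≤ |J a| → u ∈ Set.range J)
    (φ : F →L[ℝ] ℝ) :
    ∀ x : E, 0 ≤ x →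
      sSup {r : ℝ | ∃ y : F, |y| ≤ J x ∧ φ y = r} =
        sSup {r : ℝ | ∃ y : E, |y| ≤ x ∧ φ (J y) = r} := by
  -- J preserves sup
  have hsup : ∀ a b : E, J (a ⊔ b) = J a ⊔ J b := by
    intro a b
    rw [sup_eq_half_smul_add_add_abs_sub' ℝ a b,
      sup_eq_half_smul_add_add_abs_sub' ℝ (J a) (J b)]
    rw [map_smul, map_add, map_add, hJlat, map_sub]
  -- J reflects order
  have hmono : ∀ a b : E, J a ≤ J b → a ≤ b := by
    intro a b h
    have : J (a ⊔ b) = J b := by rw [hsup, sup_eq_right.2 h]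
    have := hJinj this
    exact sup_eq_right.1 this
  intro x hx
  congr 1
  ext r
  constructor
  · rintro ⟨y, hy, rfl⟩
    have hyx : |y| ≤ |J x| := by
      rwa [← hJlat, abs_of_nonneg hx]
    obtain ⟨a, rfl⟩ := hJideal y x hyx
    refine ⟨a, ?_, rfl⟩
    exact hmono _ _ (by rw [hJlat]; exact hy)
  · rintro ⟨a, ha, rfl⟩
    refine ⟨J a, ?_, rfl⟩
    rw [← hJlat]
    have : J (|a| ⊔ x) = J x := by rw [sup_eq_right.2 ha]
    rw [hsup] at this
    exact le_of_sup_eq this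
end

section
/- Let Z be a Banach lattice which is an ideal in a Banach lattice U with continuous inclusion, and let T(·) = φ(·)x be a rank-one operator on U with φ ∈ U*, x ∈ U. Define |T|(·) = |φ|(·)|x|. Then |T| maps Z into itself if and only if T does, and when T(Z) ⊆ Z one has ‖|T|‖_{Z→Z} = ‖T‖_{Z→Z}. -/
/-- Let `Z` be a Banach lattice, an ideal in a Banach lattice `U` (via the lattice
embedding `J`, with continuous inclusion), and `T = φ(·)x` a rank-one operator on `U`;
set `|T| = |φ|(·)|x|` (with `ψ = |φ|` characterized by the sup formula).  Then `|T|`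
maps `Z` into itself iff `T` does, and when `T(Z) ⊆ Z` the restrictions satisfy
`‖|T|‖_{Z→Z} = ‖T‖_{Z→Z}`. -/
theorem stmt_8 {Z U : Type*}
    [NormedAddCommGroup Z] [Lattice Z] [IsOrderedAddMonoid Z] [HasSolidNorm Z] [NormedSpace ℝ Z] [CompleteSpace Z]
    [NormedAddCommGroup U] [Lattice U] [IsOrderedAddMonoid U] [HasSolidNorm U] [NormedSpace ℝ U] [CompleteSpace U]
    (J : Z →L[ℝ] U) (hJinj : Function.Injective J)
    (hJlat : ∀ w : Z, J |w| = |J w|)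
    (hJideal : ∀ (u : U) (w : Z), |u| ≤ |J w| → u ∈ Set.range J)
    (φ ψ : U →L[ℝ] ℝ)
    (hψ : ∀ u : U, 0 ≤ u → ψ u = sSup {r : ℝ | ∃ y : U, |y| ≤ u ∧ φ y = r})
    (x : U) :
    ((∀ w : Z, ψ (J w) • |x| ∈ Set.range J) ↔ (∀ w : Z, φ (J w) • x ∈ Set.range J)) ∧
    (∀ S S' : Z →L[ℝ] Z,
      (∀ w : Z, J (S w) = φ (J w) • x) →
      (∀ w : Z, J (S' w) = ψ (J w) • |x|) →
      ‖S'‖ = ‖S‖) := by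
  -- J is positive and order-reflecting
  have hJpos : ∀ w : Z, 0 ≤ w → 0 ≤ J w := by
    intro w hw
    have h := hJlat w
    rw [abs_of_nonneg hw] at h
    rw [h]; exact abs_nonneg _
  have hJrefl : ∀ a b : Z, J a ≤ J b → a ≤ b := by
    intro a b h
    have h0 : (0:U) ≤ J (b - a) := by rw [map_sub]; exact sub_nonneg.2 h
    have h1 : J |b - a| = J (b - a) := by rw [hJlat, abs_of_nonneg h0]
    have h2 := hJinj h1
    have h3 : (0:Z) ≤ |b - a| := abs_nonneg _
    rw [h2] at h3
    exact sub_nonneg.1 h3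
  -- facts about the sup set
  have hmem : ∀ u : U, 0 ≤ u → (0:ℝ) ∈ {r : ℝ | ∃ y : U, |y| ≤ u ∧ φ y = r} :=
    fun u hu => ⟨0, by simpa using hu, map_zero φ⟩
  have hbdd : ∀ u : U, 0 ≤ u → BddAbove {r : ℝ | ∃ y : U, |y| ≤ u ∧ φ y = r} := by
    intro u hu
    refine ⟨‖φ‖ * ‖u‖, ?_⟩
    rintro r ⟨y, hy, rfl⟩
    have hy' : ‖y‖ ≤ ‖u‖ :=
      norm_le_norm_of_abs_le_abs (hy.trans (le_abs_self u))
    calc φ y ≤ |φ y| := le_abs_self _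
      _ = ‖φ y‖ := (Real.norm_eq_abs _).symm
      _ ≤ ‖φ‖ * ‖y‖ := φ.le_opNorm y
      _ ≤ ‖φ‖ * ‖u‖ := mul_le_mul_of_nonneg_left hy' (norm_nonneg φ)
  have hφle : ∀ u : U, 0 ≤ u → ∀ y : U, |y| ≤ u → φ y ≤ ψ u := by
    intro u hu y hy
    rw [hψ u hu]
    exact le_csSup (hbdd u hu) ⟨y, hy, rfl⟩
  have hψle : ∀ u : U, 0 ≤ u → ∀ c : ℝ, (∀ y : U, |y| ≤ u → φ y ≤ c) → ψ u ≤ c := by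
    intro u hu c hc
    rw [hψ u hu]
    refine csSup_le ⟨0, hmem u hu⟩ ?_
    rintro r ⟨y, hy, rfl⟩
    exact hc y hy
  have hψnn : ∀ u : U, 0 ≤ u → 0 ≤ ψ u := by
    intro u hu
    have := hφle u hu 0 (by simpa using hu)
    simpa using this
  have hψmono : ∀ u v : U, u ≤ v → ψ u ≤ ψ v := by
    intro u v huv
    have := hψnn (v - u) (sub_nonneg.2 huv)
    rw [map_sub] at this
    linarith
  have habsφ : ∀ u : U, |φ u| ≤ ψ |u| := by
    intro u
    rw [abs_le]
    constructor
    · have := hφle |u| (abs_nonneg u) (-u) (by simp)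
      rw [map_neg] at this
      linarith
    · exact hφle (|u|) (abs_nonneg u) u le_rfl
  have habsψ : ∀ u : U, |ψ u| ≤ ψ |u| := by
    intro u
    rw [abs_le]
    constructor
    · have := hψmono (-u) (|u|) ((le_abs_self (-u)).trans (le_of_eq (abs_neg u)))
      rw [map_neg] at this
      linarith
    · exact hψmono u (|u|) (le_abs_self u)
  -- zero transfer lemmas
  have hψJ0 : (∀ w : Z, φ (J w) = 0) → ∀ w : Z, ψ (J w) = 0 := by
    intro h w
    have key : ∀ v : Z, 0 ≤ v → ψ (J v) = 0 := by
      intro v hv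
      have hJv : (0:U) ≤ J v := hJpos v hv
      refine le_antisymm (hψle _ hJv 0 ?_) (hψnn _ hJv)
      intro y hy
      have hy' : |y| ≤ |J v| := by rwa [abs_of_nonneg hJv]
      obtain ⟨v', rfl⟩ := hJideal y v hy'
      simp [h v']
    have h1 := key (w⁺) (posPart_nonneg w)
    have h2 := key (w⁻) (negPart_nonneg w)
    calc ψ (J w) = ψ (J (w⁺ - w⁻)) := by rw [posPart_sub_negPart]
      _ = ψ (J (w⁺)) - ψ (J (w⁻)) := by rw [map_sub, map_sub]
      _ = 0 := by rw [h1, h2]; ring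
  have hφJ0 : (∀ w : Z, ψ (J w) = 0) → ∀ w : Z, φ (J w) = 0 := by
    intro h w
    have h1 := habsφ (J w)
    rw [← hJlat, h] at h1
    exact abs_nonpos_iff.mp h1
  -- scalar multiples of elements outside the range
  have key : ∀ (y : U), y ∉ Set.range J → ∀ r : ℝ, r • y ∈ Set.range J → r = 0 := by
    intro y hy r hr
    by_contra h
    obtain ⟨v, hv⟩ := hr
    exact hy ⟨r⁻¹ • v, by rw [map_smul, hv, smul_smul, inv_mul_cancel₀ h, one_smul]⟩
  -- rank one operator norm
  have hrank : ∀ (h : Z →L[ℝ] ℝ) (y : Z) (T : Z →L[ℝ] Z),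
      (∀ w : Z, T w = h w • y) → ‖T‖ = ‖h‖ * ‖y‖ := by
    intro h y T hT
    apply le_antisymm
    · refine T.opNorm_le_bound (mul_nonneg (norm_nonneg _) (norm_nonneg _)) ?_
      intro w
      rw [hT, norm_smul]
      calc ‖h w‖ * ‖y‖ ≤ (‖h‖ * ‖w‖) * ‖y‖ :=
            mul_le_mul_of_nonneg_right (h.le_opNorm w) (norm_nonneg y)
        _ = ‖h‖ * ‖y‖ * ‖w‖ := by ring
    · rcases eq_or_ne y 0 with rfl | hy
      · simp
      · have hy0 : (0:ℝ) < ‖y‖ := norm_pos_iff.2 hy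
        rw [mul_comm, ← le_div_iff₀' hy0]
        refine h.opNorm_le_bound (div_nonneg (norm_nonneg _) (norm_nonneg _)) ?_
        intro w
        rw [div_mul_eq_mul_div, le_div_iff₀ hy0]
        calc ‖h w‖ * ‖y‖ = ‖T w‖ := by rw [hT, norm_smul]
          _ ≤ ‖T‖ * ‖w‖ := T.le_opNorm w
  constructor
  · -- the iff
    by_cases hx : x ∈ Set.range J
    · obtain ⟨z, rfl⟩ := hx
      constructor <;> intro _ w
      · exact ⟨φ (J w) • z, by rw [map_smul]⟩
      · exact ⟨ψ (J w) • |z|, by rw [map_smul, hJlat]⟩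
    · have hx' : |x| ∉ Set.range J := by
        rintro ⟨w, hw⟩
        exact hx (hJideal x w (by rw [hw, abs_abs]))
      constructor
      · intro h w
        have hψ0 : ∀ w : Z, ψ (J w) = 0 := fun w => key |x| hx' _ (h w)
        rw [hφJ0 hψ0 w, zero_smul]
        exact ⟨0, map_zero J⟩
      · intro h w
        have hφ0 : ∀ w : Z, φ (J w) = 0 := fun w => key x hx _ (h w)
        rw [hψJ0 hφ0 w, zero_smul]
        exact ⟨0, map_zero J⟩
  · -- the norm equality
    intro S S' hS hS'
    by_cases hx : x ∈ Set.range J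
    · obtain ⟨z, rfl⟩ := hx
      have hSw : ∀ w : Z, S w = φ (J w) • z := fun w => hJinj (by rw [hS w, map_smul])
      have hS'w : ∀ w : Z, S' w = ψ (J w) • |z| :=
        fun w => hJinj (by rw [hS' w, map_smul, hJlat])
      have hSn : ‖S‖ = ‖φ.comp J‖ * ‖z‖ := hrank (φ.comp J) z S hSw
      have hS'n : ‖S'‖ = ‖ψ.comp J‖ * ‖|z|‖ := hrank (ψ.comp J) (|z|) S' hS'w
      -- norms of the restricted functionals agree
      have hgf : ‖ψ.comp J‖ ≤ ‖φ.comp J‖ := by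
        refine ContinuousLinearMap.opNorm_le_bound _ (norm_nonneg _) ?_
        intro w
        have h1 : |ψ (J w)| ≤ ψ (J |w|) := by rw [hJlat]; exact habsψ (J w)
        have h2 : ψ (J |w|) ≤ ‖φ.comp J‖ * ‖w‖ := by
          refine hψle _ (hJpos _ (abs_nonneg w)) _ ?_
          intro y hy
          have hy' : |y| ≤ |J (|w|)| := hy.trans (le_abs_self _)
          obtain ⟨v, hveq⟩ := hJideal y (|w|) hy'
          have hJvw : J (|v|) ≤ J (|w|) := by
            rw [hJlat, hveq]
            exact hy
          have hv : |v| ≤ |w| := hJrefl (|v|) (|w|) hJvw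
          calc φ y = φ (J v) := by rw [hveq]
            _ ≤ |φ (J v)| := le_abs_self _
            _ = ‖(φ.comp J) v‖ := by simp [Real.norm_eq_abs]
            _ ≤ ‖φ.comp J‖ * ‖v‖ := (φ.comp J).le_opNorm v
            _ ≤ ‖φ.comp J‖ * ‖w‖ :=
                mul_le_mul_of_nonneg_left
                  (norm_le_norm_of_abs_le_abs (by simpa [abs_abs] using hv))
                  (norm_nonneg _)
        calc ‖(ψ.comp J) w‖ = |ψ (J w)| := by simp [Real.norm_eq_abs]
          _ ≤ ψ (J |w|) := h1
          _ ≤ ‖φ.comp J‖ * ‖w‖ := h2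
      have hfg : ‖φ.comp J‖ ≤ ‖ψ.comp J‖ := by
        refine ContinuousLinearMap.opNorm_le_bound _ (norm_nonneg _) ?_
        intro w
        have h1 : |φ (J w)| ≤ ψ (J |w|) := by rw [hJlat]; exact habsφ (J w)
        calc ‖(φ.comp J) w‖ = |φ (J w)| := by simp [Real.norm_eq_abs]
          _ ≤ ψ (J |w|) := h1
          _ ≤ |ψ (J |w|)| := le_abs_self _
          _ = ‖(ψ.comp J) (|w|)‖ := by simp [Real.norm_eq_abs]
          _ ≤ ‖ψ.comp J‖ * ‖|w|‖ := (ψ.comp J).le_opNorm _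
          _ = ‖ψ.comp J‖ * ‖w‖ := by rw [norm_abs_eq_norm]
      rw [hSn, hS'n, le_antisymm hgf hfg, norm_abs_eq_norm]
    · have hφ0 : ∀ w : Z, φ (J w) = 0 := fun w => key x hx _ ⟨S w, hS w⟩
      have hψ0 := hψJ0 hφ0
      have hSz : S = 0 := by
        ext w
        exact hJinj (by rw [hS w, hφ0 w, zero_smul]; simp)
      have hS'z : S' = 0 := by
        ext w
        exact hJinj (by rw [hS' w, hψ0 w, zero_smul]; simp)
      rw [hSz, hS'z]
end

section
/- Let (X,Y) be an interpolation pair of Banach lattices and c ≥ 1. Then every intermediate Banach lattice Z with the interpolation property with constant c for positive operators also has the interpolation property with constant c for rank-one operators: P-Int_c(X,Y) ⊆ R1-Int_c(X,Y). -/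
section AuxOrder
variable {E : Type*} [NormedAddCommGroup E] [Lattice E] [IsOrderedAddMonoid E] [HasSolidNorm E] [NormedSpace ℝ E]

omit [NormedSpace ℝ E] in
/-- Lattice-ordered groups are 2-semiclosed. -/
lemma aux_half_nonneg {v : E} (h : 0 ≤ v + v) : 0 ≤ v := by
  have h1 : -v ≤ v := by
    have := add_le_add_right h (-v)
    simpa using this
  have h2 : v⁻ ≤ v⁺ := by
    rw [negPart_def, posPart_def]
    exact sup_le_sup_right h1 0
  have h3 : v⁻ = 0 := by
    rw [← posPart_inf_negPart_eq_zero v]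
    exact (inf_eq_right.mpr h2).symm
  exact negPart_eq_zero.mp h3

lemma aux_smul_nonneg {r : ℝ} (hr : 0 ≤ r) {u : E} (hu : 0 ≤ u) : 0 ≤ r • u := by
  have hpow : ∀ n : ℕ, 0 ≤ (((2 : ℝ) ^ n)⁻¹) • u := by
    intro n
    induction n with
    | zero => simpa using hu
    | succ n ih =>
      apply aux_half_nonneg
      have h : (((2:ℝ) ^ (n+1))⁻¹) • u + (((2:ℝ) ^ (n+1))⁻¹) • u = (((2:ℝ) ^ n)⁻¹) • u := by
        rw [← add_smul]; congr 1; rw [pow_succ]; field_simp; ring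
      rw [h]; exact ih
  have hdy : ∀ n : ℕ, 0 ≤ ((⌊r * 2 ^ n⌋₊ : ℝ) / 2 ^ n) • u := by
    intro n
    have h : ((⌊r * 2 ^ n⌋₊ : ℝ) / 2 ^ n) • u = ⌊r * 2 ^ n⌋₊ • ((((2:ℝ) ^ n)⁻¹) • u) := by
      rw [← Nat.cast_smul_eq_nsmul ℝ, smul_smul, div_eq_mul_inv]
    rw [h]
    exact nsmul_nonneg (hpow n) _
  have htend : Filter.Tendsto (fun n : ℕ => ((⌊r * 2 ^ n⌋₊ : ℝ) / 2 ^ n)) Filter.atTop (nhds r) := by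
    have hup : ∀ n : ℕ, (⌊r * 2 ^ n⌋₊ : ℝ) / 2 ^ n ≤ r := by
      intro n
      have h2n : (0:ℝ) < 2 ^ n := by positivity
      rw [div_le_iff₀ h2n]
      exact Nat.floor_le (by positivity)
    have hlow : ∀ n : ℕ, r - ((2:ℝ)^n)⁻¹ ≤ (⌊r * 2 ^ n⌋₊ : ℝ) / 2 ^ n := by
      intro n
      have h2n : (0:ℝ) < 2 ^ n := by positivity
      have hfl := (Nat.lt_floor_add_one (r * 2 ^ n)).le
      rw [sub_le_iff_le_add, div_add' _ _ _ h2n.ne', le_div_iff₀ h2n]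
      nlinarith [h2n, inv_mul_cancel₀ h2n.ne']
    have hl : Filter.Tendsto (fun n : ℕ => r - ((2:ℝ)^n)⁻¹) Filter.atTop (nhds r) := by
      have : Filter.Tendsto (fun n : ℕ => ((2:ℝ)^n)⁻¹) Filter.atTop (nhds 0) := by
        simp_rw [← inv_pow]
        exact tendsto_pow_atTop_nhds_zero_of_lt_one (by norm_num) (by norm_num)
      simpa using Filter.Tendsto.sub (tendsto_const_nhds : Filter.Tendsto (fun _ : ℕ => r) _ _) this
    exact tendsto_of_tendsto_of_tendsto_of_le_of_le hl tendsto_const_nhds hlow hup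
  have hcl : IsClosed {v : E | 0 ≤ v} := isClosed_nonneg
  exact hcl.mem_of_tendsto (htend.smul_const u) (Filter.Eventually.of_forall hdy)

end AuxOrder

section Aux2
variable {E : Type*} [NormedAddCommGroup E] [Lattice E] [IsOrderedAddMonoid E] [HasSolidNorm E] [NormedSpace ℝ E]

lemma aux_smul_mono {r : ℝ} (hr : 0 ≤ r) {u v : E} (h : u ≤ v) : r • u ≤ r • v := by
  have := aux_smul_nonneg hr (sub_nonneg.mpr h)
  rw [smul_sub] at this
  exact sub_nonneg.mp this

lemma aux_smul_mono_scalar {r s : ℝ} (h : r ≤ s) {u : E} (hu : 0 ≤ u) : r • u ≤ s • u := by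
  have := aux_smul_nonneg (sub_nonneg.mpr h) hu
  rw [sub_smul] at this
  exact sub_nonneg.mp this

lemma aux_abs_smul_le (r : ℝ) (u : E) : |r • u| ≤ |r| • |u| := by
  have key : ∀ (t : ℝ), 0 ≤ t → ∀ w : E, |t • w| ≤ t • |w| := by
    intro t ht w
    rw [abs_le']
    refine ⟨aux_smul_mono ht (le_abs_self w), ?_⟩
    rw [← smul_neg]
    exact aux_smul_mono ht (neg_le_abs w)
  rcases le_total 0 r with hr | hr
  · rw [abs_of_nonneg hr]; exact key r hr u
  · rw [abs_of_nonpos hr, ← abs_neg (r • u), ← neg_smul]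
    exact key (-r) (by linarith) u

omit [NormedSpace ℝ E] in
lemma aux_abs_eq_zero {v : E} (h : |v| = 0) : v = 0 :=
  le_antisymm ((le_abs_self v).trans h.le)
    (by simpa using (neg_le_abs v).trans h.le)

omit [NormedSpace ℝ E] in
/-- Riesz decomposition in a lattice-ordered group. -/
lemma aux_riesz {v u w : E} (hu : 0 ≤ u) (hw : 0 ≤ w) (hv : |v| ≤ u + w) :
    ∃ v₁ v₂ : E, v = v₁ + v₂ ∧ |v₁| ≤ u ∧ |v₂| ≤ w := by
  set v₁ : E := (v ⊓ u) ⊔ (-u) with hv₁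
  have hvu : v ≤ u + w := (le_abs_self v).trans hv
  have hnvu : -v ≤ u + w := (neg_le_abs v).trans hv
  refine ⟨v₁, v - v₁, by abel, ?_, ?_⟩
  · rw [abs_le']
    refine ⟨sup_le inf_le_right (neg_le_self hu), ?_⟩
    exact neg_le.mpr le_sup_right
  · rw [abs_le']
    constructor
    · rw [sub_le_comm]
      exact le_sup_of_le_left (le_inf (sub_le_self v hw) (sub_le_iff_le_add.mpr hvu))
    · rw [neg_sub, sub_le_iff_le_add]
      refine sup_le (inf_le_left.trans (le_add_of_nonneg_left hw)) ?_
      calc -u = -(u + w) + w := by abel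
        _ ≤ v + w := add_le_add_left (neg_le.mp hnvu) w
        _ = w + v := add_comm _ _
end Aux2

section Psi
variable {E : Type*} [NormedAddCommGroup E] [Lattice E] [IsOrderedAddMonoid E] [HasSolidNorm E] [NormedSpace ℝ E]

/-- `qF φ w = sup {φ v : |v| ≤ w}` (meaningful for `0 ≤ w`). -/
noncomputable def qF (φ : E →L[ℝ] ℝ) (w : E) : ℝ := sSup (φ '' {v | |v| ≤ w})

lemma qF_mem_zero (φ : E →L[ℝ] ℝ) {w : E} (hw : 0 ≤ w) : (0:ℝ) ∈ φ '' {v | |v| ≤ w} :=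
  ⟨0, by simpa using hw, by simp⟩

lemma qF_ptbound (φ : E →L[ℝ] ℝ) {w v : E} (hw : 0 ≤ w) (hv : |v| ≤ w) :
    φ v ≤ ‖φ‖ * ‖w‖ := by
  have habs : |v| ≤ |w| := by rwa [abs_of_nonneg hw]
  have h1 : ‖v‖ ≤ ‖w‖ := HasSolidNorm.solid habs
  calc φ v ≤ |φ v| := le_abs_self _
    _ ≤ ‖φ‖ * ‖v‖ := φ.le_opNorm v
    _ ≤ ‖φ‖ * ‖w‖ := mul_le_mul_of_nonneg_left h1 (norm_nonneg φ)

lemma qF_bdd (φ : E →L[ℝ] ℝ) {w : E} (hw : 0 ≤ w) :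
    BddAbove (φ '' {v | |v| ≤ w}) := by
  refine ⟨‖φ‖ * ‖w‖, ?_⟩
  rintro y ⟨v, hv, rfl⟩
  exact qF_ptbound φ hw hv

lemma qF_nonneg (φ : E →L[ℝ] ℝ) {w : E} (hw : 0 ≤ w) : 0 ≤ qF φ w :=
  le_csSup (qF_bdd φ hw) (qF_mem_zero φ hw)

lemma le_qF (φ : E →L[ℝ] ℝ) {v w : E} (hv : |v| ≤ w) : φ v ≤ qF φ w := by
  have hw : 0 ≤ w := (abs_nonneg v).trans hv
  exact le_csSup (qF_bdd φ hw) ⟨v, hv, rfl⟩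

lemma abs_le_qF (φ : E →L[ℝ] ℝ) {v w : E} (hv : |v| ≤ w) : |φ v| ≤ qF φ w := by
  rw [abs_le]
  refine ⟨?_, le_qF φ hv⟩
  have h2 : φ (-v) ≤ qF φ w := le_qF φ (show |(-v)| ≤ w by rwa [abs_neg])
  rw [map_neg] at h2
  linarith

lemma qF_le (φ : E →L[ℝ] ℝ) {w : E} (hw : 0 ≤ w) : qF φ w ≤ ‖φ‖ * ‖w‖ := by
  refine csSup_le ⟨0, qF_mem_zero φ hw⟩ ?_
  rintro y ⟨v, hv, rfl⟩
  exact qF_ptbound φ hw hv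

lemma qF_mono (φ : E →L[ℝ] ℝ) {w w' : E} (hw : 0 ≤ w) (h : w ≤ w') : qF φ w ≤ qF φ w' :=
  csSup_le_csSup (qF_bdd φ (hw.trans h)) ⟨0, qF_mem_zero φ hw⟩
    (Set.image_mono (fun v hv => le_trans hv h))

lemma qF_add (φ : E →L[ℝ] ℝ) {u w : E} (hu : 0 ≤ u) (hw : 0 ≤ w) :
    qF φ (u + w) = qF φ u + qF φ w := by
  apply le_antisymm
  · refine csSup_le ⟨0, qF_mem_zero φ (by positivity)⟩ ?_
    rintro y ⟨v, hv, rfl⟩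
    obtain ⟨v₁, v₂, rfl, h₁, h₂⟩ := aux_riesz hu hw hv
    rw [map_add]
    exact add_le_add (le_qF φ h₁) (le_qF φ h₂)
  · have key : ∀ y ∈ φ '' {v | |v| ≤ u}, ∀ z ∈ φ '' {v | |v| ≤ w},
        y + z ≤ qF φ (u + w) := by
      rintro y ⟨v₁, h₁, rfl⟩ z ⟨v₂, h₂, rfl⟩
      rw [← map_add]
      exact le_qF φ ((abs_add_le _ _).trans (add_le_add h₁ h₂))
    have h1 : qF φ u ≤ qF φ (u + w) - qF φ w := by
      refine csSup_le ⟨0, qF_mem_zero φ hu⟩ ?_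
      intro y hy
      rw [le_sub_iff_add_le]
      have h2 : qF φ w ≤ qF φ (u + w) - y := by
        refine csSup_le ⟨0, qF_mem_zero φ hw⟩ ?_
        intro z hz
        rw [le_sub_iff_add_le, add_comm]
        exact key y hy z hz
      linarith
    linarith

lemma qF_zero (φ : E →L[ℝ] ℝ) : qF φ 0 = 0 := by
  apply le_antisymm
  · refine csSup_le ⟨0, qF_mem_zero φ le_rfl⟩ ?_
    rintro y ⟨v, hv, rfl⟩
    have : v = 0 := aux_abs_eq_zero (le_antisymm hv (abs_nonneg v))
    simp [this]
  · exact qF_nonneg φ le_rfl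

end Psi

section Psi2
variable {E : Type*} [NormedAddCommGroup E] [Lattice E] [IsOrderedAddMonoid E] [HasSolidNorm E] [NormedSpace ℝ E]

noncomputable def psiF (φ : E →L[ℝ] ℝ) (u : E) : ℝ := qF φ u⁺ - qF φ u⁻

lemma psiF_add (φ : E →L[ℝ] ℝ) (u v : E) : psiF φ (u + v) = psiF φ u + psiF φ v := by
  have h1 : (u + v)⁺ = (u + v) + (u + v)⁻ := (eq_add_of_sub_eq (posPart_sub_negPart _))
  have h2 : u⁺ = u + u⁻ := (eq_add_of_sub_eq (posPart_sub_negPart _))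
  have h3 : v⁺ = v + v⁻ := (eq_add_of_sub_eq (posPart_sub_negPart _))
  have key : (u + v)⁺ + (u⁻ + v⁻) = (u + v)⁻ + (u⁺ + v⁺) := by
    rw [h1, h2, h3]; abel
  have eL : qF φ ((u + v)⁺ + (u⁻ + v⁻)) = qF φ (u+v)⁺ + (qF φ u⁻ + qF φ v⁻) := by
    rw [qF_add φ (posPart_nonneg _) (add_nonneg (negPart_nonneg u) (negPart_nonneg v)),
        qF_add φ (negPart_nonneg u) (negPart_nonneg v)]
  have eR : qF φ ((u + v)⁻ + (u⁺ + v⁺)) = qF φ (u+v)⁻ + (qF φ u⁺ + qF φ v⁺) := by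
    rw [qF_add φ (negPart_nonneg _) (add_nonneg (posPart_nonneg u) (posPart_nonneg v)),
        qF_add φ (posPart_nonneg u) (posPart_nonneg v)]
  have e1 : qF φ (u+v)⁺ + (qF φ u⁻ + qF φ v⁻) = qF φ (u+v)⁻ + (qF φ u⁺ + qF φ v⁺) := by
    rw [← eL, ← eR, key]
  unfold psiF
  linarith

lemma psiF_eq_qF (φ : E →L[ℝ] ℝ) {w : E} (hw : 0 ≤ w) : psiF φ w = qF φ w := by
  unfold psiF
  rw [posPart_eq_self.mpr hw, negPart_eq_zero.mpr hw, qF_zero, sub_zero]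

lemma psiF_nonneg (φ : E →L[ℝ] ℝ) {w : E} (hw : 0 ≤ w) : 0 ≤ psiF φ w := by
  rw [psiF_eq_qF φ hw]; exact qF_nonneg φ hw

lemma posPart_le_abs' (u : E) : u⁺ ≤ |u| :=
  sup_le (le_abs_self u) (abs_nonneg u)

lemma negPart_le_abs' (u : E) : u⁻ ≤ |u| :=
  sup_le (neg_le_abs u) (abs_nonneg u)

lemma norm_posPart_le' (u : E) : ‖u⁺‖ ≤ ‖u‖ := by
  rw [← norm_abs_eq_norm u]
  exact HasSolidNorm.solid (by rw [abs_of_nonneg (posPart_nonneg u),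
    abs_of_nonneg (abs_nonneg u)]; exact posPart_le_abs' u)

lemma norm_negPart_le' (u : E) : ‖u⁻‖ ≤ ‖u‖ := by
  rw [← norm_abs_eq_norm u]
  exact HasSolidNorm.solid (by rw [abs_of_nonneg (negPart_nonneg u),
    abs_of_nonneg (abs_nonneg u)]; exact negPart_le_abs' u)

lemma psiF_bound (φ : E →L[ℝ] ℝ) (u : E) : |psiF φ u| ≤ 2 * ‖φ‖ * ‖u‖ := by
  have b1 : qF φ u⁺ ≤ ‖φ‖ * ‖u‖ :=
    (qF_le φ (posPart_nonneg u)).trans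
      (mul_le_mul_of_nonneg_left (norm_posPart_le' u) (norm_nonneg φ))
  have b2 : qF φ u⁻ ≤ ‖φ‖ * ‖u‖ :=
    (qF_le φ (negPart_nonneg u)).trans
      (mul_le_mul_of_nonneg_left (norm_negPart_le' u) (norm_nonneg φ))
  have n1 : 0 ≤ qF φ u⁺ := qF_nonneg φ (posPart_nonneg u)
  have n2 : 0 ≤ qF φ u⁻ := qF_nonneg φ (negPart_nonneg u)
  unfold psiF
  rw [abs_le]
  constructor <;> nlinarith [norm_nonneg u, norm_nonneg φ]

/-- The modulus `|φ|` of a continuous functional, as a continuous linear map. -/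
noncomputable def psiL (φ : E →L[ℝ] ℝ) : E →L[ℝ] ℝ :=
  AddMonoidHom.toRealLinearMap (AddMonoidHom.mk' (psiF φ) (psiF_add φ))
    (by
      have hlip : LipschitzWith (Real.toNNReal (2 * ‖φ‖)) (psiF φ) := by
        apply LipschitzWith.of_dist_le_mul
        intro a b
        have : psiF φ a - psiF φ b = psiF φ (a - b) := by
          have := psiF_add φ (a - b) b
          simp only [sub_add_cancel] at this
          linarith
        rw [Real.dist_eq, this, dist_eq_norm]
        calc |psiF φ (a - b)| ≤ 2 * ‖φ‖ * ‖a - b‖ := psiF_bound φ (a - b)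
          _ ≤ (Real.toNNReal (2 * ‖φ‖) : ℝ) * ‖a - b‖ := by
              apply mul_le_mul_of_nonneg_right _ (norm_nonneg _)
              exact le_max_left _ _
      exact hlip.continuous)

lemma psiL_apply (φ : E →L[ℝ] ℝ) (u : E) : psiL φ u = psiF φ u := by
  simp [psiL, AddMonoidHom.coe_toRealLinearMap]
  rfl

end Psi2

section Embed
variable {X U : Type*} [NormedAddCommGroup X] [Lattice X] [IsOrderedAddMonoid X] [HasSolidNorm X] [NormedSpace ℝ X]
  [NormedAddCommGroup U] [Lattice U] [IsOrderedAddMonoid U] [HasSolidNorm U] [NormedSpace ℝ U]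

lemma aux_reflect_le (J : X →L[ℝ] U) (hinj : Function.Injective J)
    (hlat : ∀ a : X, J |a| = |J a|) {a b : X} (h : J a ≤ J b) : a ≤ b := by
  have h0 : 0 ≤ J (b - a) := by
    rw [map_sub]; exact sub_nonneg.mpr h
  have h1 : |J (b - a)| = J (b - a) := abs_of_nonneg h0
  rw [← hlat] at h1
  have h2 : |b - a| = b - a := hinj h1
  have h3 : 0 ≤ b - a := h2 ▸ abs_nonneg _
  exact sub_nonneg.mp h3

lemma aux_reflect_nonneg (J : X →L[ℝ] U) (hinj : Function.Injective J)
    (hlat : ∀ a : X, J |a| = |J a|) {a : X} (h : 0 ≤ J a) : 0 ≤ a :=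
  aux_reflect_le J hinj hlat (a := 0) (by simpa using h)

lemma aux_J_nonneg (J : X →L[ℝ] U) (hlat : ∀ a : X, J |a| = |J a|) {a : X} (h : 0 ≤ a) :
    0 ≤ J a := by
  have : J |a| = |J a| := hlat a
  rw [abs_of_nonneg h] at this
  rw [this]; exact abs_nonneg _

/-- Construction of the restriction of `|φ|⊗|x|` to a component space, with norm bound. -/
lemma aux_buildR (J : X →L[ℝ] U) (hinj : Function.Injective J)
    (hlat : ∀ a : X, J |a| = |J a|)
    (hideal : ∀ (u : U) (a : X), |u| ≤ |J a| → u ∈ Set.range J)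
    (φ : U →L[ℝ] ℝ) (x : U) (hx : x ≠ 0) (S : X →L[ℝ] X)
    (hS : ∀ a : X, J (S a) = φ (J a) • x) :
    ∃ R : X →L[ℝ] X, (∀ a : X, J (R a) = psiL φ (J a) • |x|) ∧ ‖R‖ ≤ ‖S‖ := by
  by_cases hphi : ∀ a : X, φ (J a) = 0
  · -- degenerate case: ψ vanishes on the ideal range J
    have hq : ∀ w : U, 0 ≤ w → (∃ a : X, w ≤ |J a|) → qF φ w = 0 := by
      intro w hw ⟨a, ha⟩
      apply le_antisymm _ (qF_nonneg φ hw)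
      refine csSup_le ⟨0, qF_mem_zero φ hw⟩ ?_
      rintro y ⟨v, hv, rfl⟩
      obtain ⟨av, hav⟩ := hideal v a (le_trans hv ha)
      rw [← hav, hphi av]
    have hpsi : ∀ a : X, psiL φ (J a) = 0 := by
      intro a
      rw [psiL_apply]
      unfold psiF
      rw [hq _ (posPart_nonneg _) ⟨a, (posPart_le_abs' _)⟩,
          hq _ (negPart_nonneg _) ⟨a, (negPart_le_abs' _)⟩, sub_zero]
    refine ⟨0, fun a => ?_, by simp⟩
    rw [hpsi a, zero_smul]
    simp
  · push_neg at hphi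
    obtain ⟨a₀, ha₀⟩ := hphi
    set xt : X := (φ (J a₀))⁻¹ • S a₀ with hxt
    have hJxt : J xt = x := by
      rw [hxt, map_smul, hS a₀, smul_smul, inv_mul_cancel₀ ha₀, one_smul]
    have hxtne : xt ≠ 0 := fun h => hx (by rw [← hJxt, h, map_zero])
    have hxtpos : 0 < ‖xt‖ := norm_pos_iff.mpr hxtne
    clear_value xt
    set R : X →L[ℝ] X := ((psiL φ).comp J).smulRight |xt| with hR
    have hRa : ∀ a : X, J (R a) = psiL φ (J a) • |x| := by
      intro a
      rw [hR]
      simp only [ContinuousLinearMap.smulRight_apply, ContinuousLinearMap.comp_apply]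
      rw [map_smul, hlat, hJxt]
    refine ⟨R, hRa, ?_⟩
    apply ContinuousLinearMap.opNorm_le_bound _ (norm_nonneg S)
    intro a
    have h1 : ‖R a‖ = |psiL φ (J a)| * ‖xt‖ := by
      rw [hR]
      simp only [ContinuousLinearMap.smulRight_apply, ContinuousLinearMap.comp_apply]
      rw [norm_smul, Real.norm_eq_abs, norm_abs_eq_norm]
    have h2 : |psiL φ (J a)| ≤ qF φ |J a| := by
      rw [psiL_apply]
      unfold psiF
      have n1 : 0 ≤ qF φ (J a)⁺ := qF_nonneg φ (posPart_nonneg _)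
      have n2 : 0 ≤ qF φ (J a)⁻ := qF_nonneg φ (negPart_nonneg _)
      have m1 : qF φ (J a)⁺ ≤ qF φ |J a| := qF_mono φ (posPart_nonneg _) (posPart_le_abs' _)
      have m2 : qF φ (J a)⁻ ≤ qF φ |J a| := qF_mono φ (negPart_nonneg _) (negPart_le_abs' _)
      rw [abs_le]; constructor <;> linarith
    have h3 : qF φ |J a| * ‖xt‖ ≤ ‖S‖ * ‖a‖ := by
      rw [← le_div_iff₀ hxtpos]
      refine csSup_le ⟨0, qF_mem_zero φ (abs_nonneg _)⟩ ?_
      rintro y ⟨v, hv, rfl⟩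
      obtain ⟨av, hav⟩ := hideal v a hv
      have hord : |av| ≤ |a| := by
        apply aux_reflect_le J hinj hlat
        rw [hlat, hlat, hav]
        exact hv
      have hnorm : ‖av‖ ≤ ‖a‖ := by
        rw [← norm_abs_eq_norm av, ← norm_abs_eq_norm a]
        exact HasSolidNorm.solid (by rwa [abs_of_nonneg (abs_nonneg av),
          abs_of_nonneg (abs_nonneg a)])
      have hSav : S av = φ v • xt := by
        apply hinj
        rw [hS av, hav, map_smul, hJxt]
      have : |φ v| * ‖xt‖ ≤ ‖S‖ * ‖a‖ := by
        calc |φ v| * ‖xt‖ = ‖S av‖ := by rw [hSav, norm_smul, Real.norm_eq_abs]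
          _ ≤ ‖S‖ * ‖av‖ := S.le_opNorm av
          _ ≤ ‖S‖ * ‖a‖ := mul_le_mul_of_nonneg_left hnorm (norm_nonneg S)
      rw [le_div_iff₀ hxtpos]
      calc φ v * ‖xt‖ ≤ |φ v| * ‖xt‖ :=
            mul_le_mul_of_nonneg_right (le_abs_self _) (norm_nonneg _)
        _ ≤ ‖S‖ * ‖a‖ := this
    calc ‖R a‖ = |psiL φ (J a)| * ‖xt‖ := h1
      _ ≤ qF φ |J a| * ‖xt‖ := mul_le_mul_of_nonneg_right h2 (norm_nonneg _)
      _ ≤ ‖S‖ * ‖a‖ := h3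

end Embed



/-- Let `(X,Y)` be an interpolation pair of Banach lattices (modelled via lattice
embeddings `JX`, `JY` with ideal ranges into the Banach lattice `U = X+Y`, which they
span) and let `Z` be an intermediate Banach lattice (`X∩Y ↪ Z ↪ X+Y`, continuous ideal
inclusions).  If `Z` has the interpolation property with constant `c ≥ 1` for all
operators `T` on `X+Y` with positive restrictions to `X` and `Y` (i.e. `Z ∈ P-Int_c`),
then `Z` has the interpolation property with constant `c` for all rank-one operators
`T = φ(·)x` mapping `X` into `X` and `Y` into `Y` continuously (i.e. `Z ∈ R1-Int_c`). -/
theorem stmt_9 {U X Y Z : Type*}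
    [NormedAddCommGroup U] [Lattice U] [IsOrderedAddMonoid U] [HasSolidNorm U] [NormedSpace ℝ U] [CompleteSpace U]
    [NormedAddCommGroup X] [Lattice X] [IsOrderedAddMonoid X] [HasSolidNorm X] [NormedSpace ℝ X] [CompleteSpace X]
    [NormedAddCommGroup Y] [Lattice Y] [IsOrderedAddMonoid Y] [HasSolidNorm Y] [NormedSpace ℝ Y] [CompleteSpace Y]
    [NormedAddCommGroup Z] [Lattice Z] [IsOrderedAddMonoid Z] [HasSolidNorm Z] [NormedSpace ℝ Z] [CompleteSpace Z]
    (JX : X →L[ℝ] U) (JY : Y →L[ℝ] U) (JZ : Z →L[ℝ] U)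
    (hJXinj : Function.Injective JX) (hJYinj : Function.Injective JY)
    (hJZinj : Function.Injective JZ)
    (hJXlat : ∀ a : X, JX |a| = |JX a|) (hJYlat : ∀ b : Y, JY |b| = |JY b|)
    (hJZlat : ∀ w : Z, JZ |w| = |JZ w|)
    (hJXideal : ∀ (u : U) (a : X), |u| ≤ |JX a| → u ∈ Set.range JX)
    (hJYideal : ∀ (u : U) (b : Y), |u| ≤ |JY b| → u ∈ Set.range JY)
    (hJZideal : ∀ (u : U) (w : Z), |u| ≤ |JZ w| → u ∈ Set.range JZ)
    (hsum : ∀ u : U, ∃ (a : X) (b : Y), u = JX a + JY b)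
    (hinter : ∃ C : ℝ, 0 < C ∧ ∀ (a : X) (b : Y) (w : Z),
      JX a = JY b → JZ w = JX a → ‖w‖ ≤ C * max ‖a‖ ‖b‖)
    (c : ℝ) (hc : 1 ≤ c)
    (hP : ∀ T : U →ₗ[ℝ] U,
      (∀ a : X, ∃ a' : X, JX a' = T (JX a)) →
      (∀ a : X, 0 ≤ a → ∀ a' : X, JX a' = T (JX a) → 0 ≤ a') →
      (∀ b : Y, ∃ b' : Y, JY b' = T (JY b)) →
      (∀ b : Y, 0 ≤ b → ∀ b' : Y, JY b' = T (JY b) → 0 ≤ b') →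
      (∀ w : Z, ∃ w' : Z, JZ w' = T (JZ w)) ∧
      ∀ (SZ : Z →L[ℝ] Z) (SX : X →L[ℝ] X) (SY : Y →L[ℝ] Y),
        (∀ w : Z, JZ (SZ w) = T (JZ w)) →
        (∀ a : X, JX (SX a) = T (JX a)) →
        (∀ b : Y, JY (SY b) = T (JY b)) →
        ‖SZ‖ ≤ c * max ‖SX‖ ‖SY‖) :
    ∀ (φ : U →L[ℝ] ℝ) (x : U),
      (∃ SX : X →L[ℝ] X, ∀ a : X, JX (SX a) = φ (JX a) • x) →
      (∃ SY : Y →L[ℝ] Y, ∀ b : Y, JY (SY b) = φ (JY b) • x) →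
      (∀ w : Z, ∃ w' : Z, JZ w' = φ (JZ w) • x) ∧
      ∀ (SZ : Z →L[ℝ] Z) (SX : X →L[ℝ] X) (SY : Y →L[ℝ] Y),
        (∀ w : Z, JZ (SZ w) = φ (JZ w) • x) →
        (∀ a : X, JX (SX a) = φ (JX a) • x) →
        (∀ b : Y, JY (SY b) = φ (JY b) • x) →
        ‖SZ‖ ≤ c * max ‖SX‖ ‖SY‖ := by
  intro φ x hSXe hSYe
  have hc0 : (0:ℝ) ≤ c := le_trans zero_le_one hc
  by_cases hx : x = 0
  · subst hx
    constructor
    · intro w; exact ⟨0, by simp⟩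
    · intro SZ SX SY hSZ _ _
      have hz : ∀ w : Z, SZ w = 0 := by
        intro w
        apply hJZinj
        rw [hSZ w]; simp
      have : SZ = 0 := ContinuousLinearMap.ext fun w => hz w
      rw [this, norm_zero]
      exact mul_nonneg hc0 (le_trans (norm_nonneg SX) (le_max_left _ _))
  · obtain ⟨SX₀, hSX₀⟩ := hSXe
    obtain ⟨SY₀, hSY₀⟩ := hSYe
    obtain ⟨RX₀, hRX₀, _⟩ := aux_buildR JX hJXinj hJXlat hJXideal φ x hx SX₀ hSX₀
    obtain ⟨RY₀, hRY₀, _⟩ := aux_buildR JY hJYinj hJYlat hJYideal φ x hx SY₀ hSY₀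
    set SL : U →L[ℝ] U := (psiL φ).smulRight |x| with hSL
    have hSLapp : ∀ u : U, SL u = psiL φ u • |x| := fun u => rfl
    set T : U →ₗ[ℝ] U := (SL : U →ₗ[ℝ] U) with hT
    have hTapp : ∀ u : U, T u = psiL φ u • |x| := fun u => rfl
    have hexX : ∀ a : X, ∃ a' : X, JX a' = T (JX a) :=
      fun a => ⟨RX₀ a, by rw [hRX₀ a, hTapp]⟩
    have hexY : ∀ b : Y, ∃ b' : Y, JY b' = T (JY b) :=
      fun b => ⟨RY₀ b, by rw [hRY₀ b, hTapp]⟩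
    have hposX : ∀ a : X, 0 ≤ a → ∀ a' : X, JX a' = T (JX a) → 0 ≤ a' := by
      intro a ha a' h
      have hJa : 0 ≤ JX a := aux_J_nonneg JX hJXlat ha
      have hpsi : 0 ≤ psiL φ (JX a) := by rw [psiL_apply]; exact psiF_nonneg φ hJa
      have h0 : 0 ≤ JX a' := by
        rw [h, hTapp]; exact aux_smul_nonneg hpsi (abs_nonneg x)
      exact aux_reflect_nonneg JX hJXinj hJXlat h0
    have hposY : ∀ b : Y, 0 ≤ b → ∀ b' : Y, JY b' = T (JY b) → 0 ≤ b' := by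
      intro b hb b' h
      have hJb : 0 ≤ JY b := aux_J_nonneg JY hJYlat hb
      have hpsi : 0 ≤ psiL φ (JY b) := by rw [psiL_apply]; exact psiF_nonneg φ hJb
      have h0 : 0 ≤ JY b' := by
        rw [h, hTapp]; exact aux_smul_nonneg hpsi (abs_nonneg x)
      exact aux_reflect_nonneg JY hJYinj hJYlat h0
    obtain ⟨hexZ, hineq⟩ := hP T hexX hposX hexY hposY
    -- build the restriction of SL to Z as a continuous linear map
    choose f hf using hexZ
    have hfadd : ∀ u v : Z, f (u + v) = f u + f v := by
      intro u v
      apply hJZinj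
      rw [hf, map_add, map_add, map_add, hf, hf]
    have hfsmul : ∀ (r : ℝ) (u : Z), f (r • u) = r • f u := by
      intro r u
      apply hJZinj
      rw [hf, map_smul, map_smul, map_smul, hf]
    set g : Z →ₗ[ℝ] Z :=
      { toFun := f
        map_add' := hfadd
        map_smul' := hfsmul } with hg
    have hgraph : IsClosed (g.graph : Set (Z × Z)) := by
      have heq : (g.graph : Set (Z × Z)) = {p : Z × Z | JZ p.2 = SL (JZ p.1)} := by
        ext p
        constructor
        · intro hp
          have h1 : p.2 = g p.1 := (LinearMap.mem_graph_iff g p).mp hp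
          have h2 : JZ (f p.1) = T (JZ p.1) := hf p.1
          simp only [Set.mem_setOf_eq]
          rw [h1]
          exact h2
        · intro hp
          simp only [Set.mem_setOf_eq] at hp
          apply (LinearMap.mem_graph_iff g p).mpr
          apply hJZinj
          rw [hp]
          exact (hf p.1).symm
      rw [heq]
      exact isClosed_eq (JZ.continuous.comp continuous_snd)
        (SL.continuous.comp (JZ.continuous.comp continuous_fst))
    set RZ : Z →L[ℝ] Z := ContinuousLinearMap.ofIsClosedGraph hgraph with hRZdef
    have hRZcoe : ∀ w : Z, RZ w = f w := fun w => by
      rw [hRZdef]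
      exact congrFun (ContinuousLinearMap.coeFn_ofIsClosedGraph hgraph) w
    have hRZ : ∀ w : Z, JZ (RZ w) = T (JZ w) := fun w => by rw [hRZcoe w]; exact hf w
    -- domination
    have hdom : ∀ w : Z, |φ (JZ w) • x| ≤ JZ (RZ |w|) := by
      intro w
      have h1 : |φ (JZ w) • x| ≤ |φ (JZ w)| • |x| := aux_abs_smul_le _ _
      have h2 : |φ (JZ w)| ≤ psiL φ (JZ |w|) := by
        rw [psiL_apply, hJZlat, psiF_eq_qF φ (abs_nonneg _)]
        exact abs_le_qF φ le_rfl
      have h3 : |φ (JZ w)| • |x| ≤ psiL φ (JZ |w|) • |x| :=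
        aux_smul_mono_scalar h2 (abs_nonneg x)
      rw [hRZ |w|, hTapp]
      exact h1.trans h3
    constructor
    · intro w
      obtain ⟨w', hw'⟩ := hJZideal (φ (JZ w) • x) (RZ |w|)
        (le_trans (hdom w) (le_abs_self _))
      exact ⟨w', hw'⟩
    · intro SZ SX SY hSZ hSXc hSYc
      obtain ⟨RX, hRX, hRXn⟩ := aux_buildR JX hJXinj hJXlat hJXideal φ x hx SX hSXc
      obtain ⟨RY, hRY, hRYn⟩ := aux_buildR JY hJYinj hJYlat hJYideal φ x hx SY hSYc
      have hZb : ‖RZ‖ ≤ c * max ‖RX‖ ‖RY‖ :=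
        hineq RZ RX RY hRZ (fun a => by rw [hRX a, hTapp])
          (fun b => by rw [hRY b, hTapp])
      have hpt : ∀ w : Z, ‖SZ w‖ ≤ ‖RZ‖ * ‖w‖ := by
        intro w
        have habs : |SZ w| ≤ RZ |w| := by
          apply aux_reflect_le JZ hJZinj hJZlat
          rw [hJZlat]
          calc |JZ (SZ w)| = |φ (JZ w) • x| := by rw [hSZ w]
            _ ≤ JZ (RZ |w|) := hdom w
        calc ‖SZ w‖ = ‖|SZ w|‖ := (norm_abs_eq_norm _).symm
          _ ≤ ‖RZ |w|‖ := by
              apply HasSolidNorm.solid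
              rw [abs_of_nonneg (abs_nonneg (SZ w)),
                abs_of_nonneg (le_trans (abs_nonneg (SZ w)) habs)]
              exact habs
          _ ≤ ‖RZ‖ * ‖|w|‖ := RZ.le_opNorm _
          _ = ‖RZ‖ * ‖w‖ := by rw [norm_abs_eq_norm]
      have hSZn : ‖SZ‖ ≤ ‖RZ‖ := SZ.opNorm_le_bound (norm_nonneg RZ) hpt
      calc ‖SZ‖ ≤ ‖RZ‖ := hSZn
        _ ≤ c * max ‖RX‖ ‖RY‖ := hZb
        _ ≤ c * max ‖SX‖ ‖SY‖ :=
            mul_le_mul_of_nonneg_left (max_le_max hRXn hRYn) hc0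
end
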